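/- As t → ∞, ∫₀^∞ exp(ν√t y) · √(2/π) · exp(−y²/2) dy ∼ −(1/ν)·√(2/(πt)) for any fixed ν < 0. -/

import Mathlib

open MeasureTheory Filter Topology Real

lemma aux_tendsto : Tendsto
    (fun a : ℝ => ∫ u in Set.Ioi (0:ℝ), exp (-u - u ^ 2 / (2 * a ^ 2))) atTop (𝓝 1) := by
  have h1 : (1:ℝ) = ∫ u in Set.Ioi (0:ℝ), exp (-u) := integral_exp_neg_Ioi_zero.symm
  rw [h1]
  apply tendsto_integral_filter_of_dominated_convergence (fun u => exp (-u))
  · filter_upwards with a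
    exact (Continuous.aestronglyMeasurable (by continuity)).restrict
  · filter_upwards with a
    filter_upwards with u
    rw [Real.norm_eq_abs, abs_of_pos (exp_pos _)]
    apply exp_le_exp.mpr
    have : 0 ≤ u ^ 2 / (2 * a ^ 2) := by positivity
    linarith
  · exact (by simpa using exp_neg_integrableOn_Ioi 0 one_pos : IntegrableOn (fun u : ℝ => exp (-u)) (Set.Ioi 0))
  · filter_upwards with u
    have h2 : Tendsto (fun a : ℝ => u ^ 2 / (2 * a ^ 2)) atTop (𝓝 0) := by
      apply Tendsto.div_atTop tendsto_const_nhds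
      exact Tendsto.const_mul_atTop two_pos (tendsto_pow_atTop two_ne_zero)
    have h3 : Tendsto (fun a : ℝ => -u - u ^ 2 / (2 * a ^ 2)) atTop (𝓝 (-u)) := by
      simpa using tendsto_const_nhds.sub h2
    exact (Real.continuous_exp.tendsto _).comp h3

/-- Partition function asymptotic on `L₁`: for fixed `ν < 0`,
`∫₀^∞ exp(ν√t y) √(2/π) exp(−y²/2) dy ∼ −(1/ν)√(2/(πt))` as `t → ∞`. -/
theorem partition_asymptotic_L1 (ν : ℝ) (hν : ν < 0) :
    Tendsto
      (fun t : ℝ =>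
        (∫ y in Set.Ioi (0:ℝ), exp (ν * sqrt t * y) * (sqrt (2 / π) * exp (-y ^ 2 / 2))) /
          (-(1 / ν) * sqrt (2 / (π * t))))
      atTop (𝓝 1) := by
  have hsq : Tendsto Real.sqrt atTop atTop := by
    apply tendsto_atTop_atTop.mpr
    intro b
    refine ⟨max 0 (b ^ 2), fun x hx => ?_⟩
    calc b ≤ |b| := le_abs_self b
      _ = sqrt (b ^ 2) := (Real.sqrt_sq_eq_abs b).symm
      _ ≤ sqrt x := Real.sqrt_le_sqrt (le_trans (le_max_right _ _) hx)
  have ha : Tendsto (fun t : ℝ => -ν * sqrt t) atTop atTop :=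
    hsq.const_mul_atTop (by linarith)
  have key := aux_tendsto.comp ha
  apply key.congr'
  filter_upwards [eventually_gt_atTop 0] with t ht
  set a : ℝ := -ν * sqrt t with hadef
  have hst : 0 < sqrt t := sqrt_pos.mpr ht
  have ha0 : 0 < a := mul_pos (by linarith) hst
  -- change of variables
  have hsub : (∫ u in Set.Ioi (0:ℝ), exp (-u - u ^ 2 / (2 * a ^ 2)))
      = a • ∫ y in Set.Ioi (0:ℝ), exp (-(a * y) - (a * y) ^ 2 / (2 * a ^ 2)) := by
    rw [integral_comp_mul_left_Ioi (fun u => exp (-u - u ^ 2 / (2 * a ^ 2))) 0 ha0,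
      mul_zero, smul_smul, mul_inv_cancel₀ ha0.ne', one_smul]
  have hexp : ∀ y : ℝ, exp (-(a * y) - (a * y) ^ 2 / (2 * a ^ 2))
      = exp (ν * sqrt t * y) * exp (-y ^ 2 / 2) := by
    intro y
    rw [← Real.exp_add]
    congr 1
    have : (a * y) ^ 2 / (2 * a ^ 2) = y ^ 2 / 2 := by
      field_simp
    rw [this, hadef]; ring
  have hπ : (0:ℝ) < π := pi_pos
  have hden : -(1 / ν) * sqrt (2 / (π * t)) = sqrt (2 / π) / a := by
    rw [hadef]
    rw [show (2 : ℝ) / (π * t) = (2 / π) * (1 / t) by field_simp,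
      sqrt_mul (by positivity), sqrt_div' 1 (le_of_lt ht), sqrt_one]
    field_simp
  show (∫ u in Set.Ioi (0:ℝ), exp (-u - u ^ 2 / (2 * a ^ 2)))
      = (∫ y in Set.Ioi (0:ℝ), exp (ν * sqrt t * y) * (sqrt (2 / π) * exp (-y ^ 2 / 2))) /
      (-(1 / ν) * sqrt (2 / (π * t)))
  rw [hsub, hden]
  have : (∫ y in Set.Ioi (0:ℝ), exp (ν * sqrt t * y) * (sqrt (2 / π) * exp (-y ^ 2 / 2)))
      = sqrt (2 / π) * ∫ y in Set.Ioi (0:ℝ), exp (-(a * y) - (a * y) ^ 2 / (2 * a ^ 2)) := by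
    rw [← integral_const_mul]
    congr 1; ext y; rw [hexp]; ring
  rw [this, smul_eq_mul]
  have hs : (0:ℝ) < sqrt (2 / π) := sqrt_pos.mpr (by positivity)
  field_simp
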